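/- Let A be a domain which is a real closed ring (in particular: for all 0 ≤ a ≤ b in A there exists c with bc = a², and positive elements are squares). Then A equals its fraction field if and only if A is cofinal in its fraction field. -/

import Mathlib

/-- Let `A` be a real closed domain (realized as a subring of its ordered
fraction field `K`, with nonnegative elements of `A` squares in `A`, and for all
`0 ≤ a ≤ b` in `A` some `c ∈ A` with `b * c = a ^ 2`). Then `A` equals its fraction
field iff `A` is cofinal in its fraction field. -/
theorem eq_fractionField_iff_cofinal {K : Type*} [Field K] [LinearOrder K] [IsStrictOrderedRing K]
    (A : Subring K)
    (hfrac : ∀ x : K, ∃ a ∈ A, ∃ b ∈ A, b ≠ 0 ∧ x = a / b)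
    (hsq : ∀ a ∈ A, (0 : K) ≤ a → ∃ b ∈ A, b ^ 2 = a)
    (hdiv : ∀ a ∈ A, ∀ b ∈ A, 0 ≤ a → a ≤ b → ∃ c ∈ A, b * c = a ^ 2) :
    (∀ x : K, x ∈ A) ↔ (∀ x : K, ∃ b ∈ A, x ≤ b) := by
  constructor
  · intro h x
    exact ⟨x, h x, le_refl x⟩
  · intro hcof
    -- Key: every nonzero element of A has its inverse in A (for positive b first)
    have hinv_pos : ∀ b : K, b ∈ A → 0 < b → b⁻¹ ∈ A := by
      intro b hb hbpos
      obtain ⟨d, hd, hle⟩ := hcof b⁻¹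
      have hdpos : 0 < d := lt_of_lt_of_le (inv_pos.mpr hbpos) hle
      have h1 : (1 : K) ≤ b * d := by
        calc (1 : K) = b * b⁻¹ := (mul_inv_cancel₀ (ne_of_gt hbpos)).symm
        _ ≤ b * d := mul_le_mul_of_nonneg_left hle (le_of_lt hbpos)
      have hbd : b * d ∈ A := A.mul_mem hb hd
      obtain ⟨c, hc, hbc⟩ := hdiv 1 A.one_mem (b * d) hbd zero_le_one h1
      rw [one_pow] at hbc
      -- c = (b*d)⁻¹
      have hbdne : b * d ≠ 0 := ne_of_gt (mul_pos hbpos hdpos)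
      have hceq : c = (b * d)⁻¹ := by
        field_simp at hbc ⊢
        linarith [hbc]
      have : b⁻¹ = d * c := by
        rw [hceq, mul_inv]
        field_simp
      rw [this]
      exact A.mul_mem hd hc
    have hinv : ∀ b : K, b ∈ A → b ≠ 0 → b⁻¹ ∈ A := by
      intro b hb hbne
      rcases lt_or_gt_of_ne hbne with hneg | hpos
      · have := hinv_pos (-b) (A.neg_mem hb) (by linarith)
        rw [inv_neg] at this
        simpa using A.neg_mem this
      · exact hinv_pos b hb hpos
    intro x
    obtain ⟨a, ha, b, hb, hbne, hx⟩ := hfrac x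
    rw [hx, div_eq_mul_inv]
    exact A.mul_mem ha (hinv b hb hbne)
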